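/- arXiv:1004.4621 — 3 statements merged into one kernel-verified Lean document; each statement's English description precedes it below -/
import Mathlib

section
/- Let X be a Banach space, A : X → X bounded with ‖A‖ ≤ M, and suppose e ∈ C²([0,T]; X) solves e''(t) = A e(t) + d(t) with e(0) = 0, e'(0) = 0, where d ∈ C([0,T]; X). Then for all t ∈ [0,T], ‖e(t)‖ ≤ ∫₀ᵗ (sinh(√M (t−τ))/√M) ‖d(τ)‖ dτ. -/
open MeasureTheory Real intervalIntegral Set

noncomputable def P7 (s : ℝ) (ρ : ℝ → ℝ) (x : ℝ) : ℝ := ∫ τ in (0:ℝ)..x, Real.cosh (s*τ) * ρ τ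
noncomputable def Q7 (s : ℝ) (ρ : ℝ → ℝ) (x : ℝ) : ℝ := ∫ τ in (0:ℝ)..x, Real.sinh (s*τ) * ρ τ
noncomputable def w7 (s : ℝ) (ρ : ℝ → ℝ) (x : ℝ) : ℝ :=
  Real.sinh (s*x)/s * P7 s ρ x - Real.cosh (s*x)/s * Q7 s ρ x
noncomputable def w7' (s : ℝ) (ρ : ℝ → ℝ) (x : ℝ) : ℝ :=
  Real.cosh (s*x) * P7 s ρ x - Real.sinh (s*x) * Q7 s ρ x

lemma ftc7 {T : ℝ} (h : ℝ → ℝ) (hh : ContinuousOn h (Set.Icc 0 T)) {σ : ℝ}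
    (hσ : σ ∈ Set.Ioo 0 T) :
    HasDerivWithinAt (fun x => ∫ τ in (0:ℝ)..x, h τ) (h σ) (Set.Ioi σ) σ := by
  have hmem : Set.Icc (0:ℝ) T ∈ nhdsWithin σ (Set.Ioi σ) :=
    Filter.mem_of_superset (Ioc_mem_nhdsGT_of_mem ⟨le_refl σ, hσ.2⟩)
      (fun x hx => ⟨le_of_lt (lt_of_lt_of_le hσ.1 hx.1.le), hx.2⟩)
  have hint : IntervalIntegrable h volume 0 σ := by
    apply ContinuousOn.intervalIntegrable
    rw [Set.uIcc_of_le hσ.1.le]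
    exact hh.mono (Set.Icc_subset_Icc le_rfl hσ.2.le)
  have hmeas : StronglyMeasurableAtFilter h (nhdsWithin σ (Set.Ioi σ)) := by
    have := hh.stronglyMeasurableAtFilter_nhdsWithin (μ := volume) measurableSet_Icc σ
    exact this.filter_mono (nhdsWithin_le_iff.mpr hmem)
  have hcw : ContinuousWithinAt h (Set.Ioi σ) σ :=
    (hh σ ⟨hσ.1.le, hσ.2.le⟩).mono_of_mem_nhdsWithin hmem
  exact (integral_hasDerivWithinAt_right hint hmeas hcw).mono Set.Ioi_subset_Ici_self

lemma sinh7 (s σ : ℝ) : HasDerivAt (fun x => Real.sinh (s*x)) (s * Real.cosh (s*σ)) σ := by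
  have h1 : HasDerivAt (fun x : ℝ => s * x) s σ := by
    simpa using (hasDerivAt_id σ).const_mul s
  exact ((Real.hasDerivAt_sinh (s*σ)).comp σ h1).congr_deriv (mul_comm _ _)

lemma cosh7 (s σ : ℝ) : HasDerivAt (fun x => Real.cosh (s*x)) (s * Real.sinh (s*σ)) σ := by
  have h1 : HasDerivAt (fun x : ℝ => s * x) s σ := by
    simpa using (hasDerivAt_id σ).const_mul s
  exact ((Real.hasDerivAt_cosh (s*σ)).comp σ h1).congr_deriv (mul_comm _ _)

lemma w7_hasDeriv {T s : ℝ} (hs : 0 < s) (ρ : ℝ → ℝ) (hρ : ContinuousOn ρ (Set.Icc 0 T))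
    {σ : ℝ} (hσ : σ ∈ Set.Ioo 0 T) :
    HasDerivWithinAt (w7 s ρ) (w7' s ρ σ) (Set.Ioi σ) σ := by
  have hP := ftc7 (fun τ => Real.cosh (s*τ) * ρ τ)
    ((Real.continuous_cosh.comp (continuous_const.mul continuous_id)).continuousOn.mul hρ) hσ
  have hQ := ftc7 (fun τ => Real.sinh (s*τ) * ρ τ)
    ((Real.continuous_sinh.comp (continuous_const.mul continuous_id)).continuousOn.mul hρ) hσ
  have h1 : HasDerivWithinAt (fun x => Real.sinh (s*x)/s) (Real.cosh (s*σ)) (Set.Ioi σ) σ := by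
    have := ((sinh7 s σ).div_const s).hasDerivWithinAt (s := Set.Ioi σ)
    simpa [mul_div_assoc, mul_div_cancel_left₀ _ hs.ne'] using this
  have h2 : HasDerivWithinAt (fun x => Real.cosh (s*x)/s) (Real.sinh (s*σ)) (Set.Ioi σ) σ := by
    have := ((cosh7 s σ).div_const s).hasDerivWithinAt (s := Set.Ioi σ)
    simpa [mul_div_assoc, mul_div_cancel_left₀ _ hs.ne'] using this
  have hw := (h1.mul hP).sub (h2.mul hQ)
  have : w7 s ρ = fun x => Real.sinh (s*x)/s * P7 s ρ x - Real.cosh (s*x)/s * Q7 s ρ x := rfl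
  rw [this]
  refine hw.congr_deriv (Eq.symm ?_)
  simp only [w7', P7, Q7]
  have hcs : Real.cosh (s*σ) ^ 2 - Real.sinh (s*σ) ^ 2 = 1 := Real.cosh_sq_sub_sinh_sq _
  field_simp
  nlinarith [hcs]

lemma w7'_hasDeriv {T s : ℝ} (hs : 0 < s) (ρ : ℝ → ℝ) (hρ : ContinuousOn ρ (Set.Icc 0 T))
    {σ : ℝ} (hσ : σ ∈ Set.Ioo 0 T) :
    HasDerivWithinAt (w7' s ρ) (s^2 * w7 s ρ σ + ρ σ) (Set.Ioi σ) σ := by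
  have hP := ftc7 (fun τ => Real.cosh (s*τ) * ρ τ)
    ((Real.continuous_cosh.comp (continuous_const.mul continuous_id)).continuousOn.mul hρ) hσ
  have hQ := ftc7 (fun τ => Real.sinh (s*τ) * ρ τ)
    ((Real.continuous_sinh.comp (continuous_const.mul continuous_id)).continuousOn.mul hρ) hσ
  have h1 := (cosh7 s σ).hasDerivWithinAt (s := Set.Ioi σ)
  have h2 := (sinh7 s σ).hasDerivWithinAt (s := Set.Ioi σ)
  have hw := (h1.mul hP).sub (h2.mul hQ)
  have : w7' s ρ = fun x => Real.cosh (s*x) * P7 s ρ x - Real.sinh (s*x) * Q7 s ρ x := rfl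
  rw [this]
  refine hw.congr_deriv (Eq.symm ?_)
  simp only [w7, P7, Q7]
  have hcs : Real.cosh (s*σ) ^ 2 - Real.sinh (s*σ) ^ 2 = 1 := Real.cosh_sq_sub_sinh_sq _
  field_simp
  linear_combination (-(ρ σ)) * hcs

lemma contInt7 {T s : ℝ} (hT : 0 ≤ T) (h : ℝ → ℝ) (ρ : ℝ → ℝ)
    (hh : Continuous h) (hρ : ContinuousOn ρ (Set.Icc 0 T)) :
    ContinuousOn (fun x => ∫ τ in (0:ℝ)..x, h (s*τ) * ρ τ) (Set.Icc 0 T) := by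
  have hint : IntegrableOn (fun τ => h (s*τ) * ρ τ) (Set.uIcc 0 T) volume := by
    rw [Set.uIcc_of_le hT]
    exact (((hh.comp (continuous_const.mul continuous_id)).continuousOn.mul
      hρ)).integrableOn_Icc
  have := continuousOn_primitive_interval hint
  rwa [Set.uIcc_of_le hT] at this

lemma w7_cont {T s : ℝ} (hs : 0 < s) (hT : 0 ≤ T) (ρ : ℝ → ℝ)
    (hρ : ContinuousOn ρ (Set.Icc 0 T)) : ContinuousOn (w7 s ρ) (Set.Icc 0 T) := by
  have hPc : ContinuousOn (P7 s ρ) (Set.Icc 0 T) := contInt7 hT Real.cosh ρ Real.continuous_cosh hρ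
  have hQc : ContinuousOn (Q7 s ρ) (Set.Icc 0 T) := contInt7 hT Real.sinh ρ Real.continuous_sinh hρ
  exact (((Real.continuous_sinh.comp (continuous_const.mul continuous_id)).div_const
    s).continuousOn.mul hPc).sub
    (((Real.continuous_cosh.comp (continuous_const.mul continuous_id)).div_const
    s).continuousOn.mul hQc)

lemma norm_cont7 {T s : ℝ} (hs : 0 < s) (hT : 0 ≤ T) (ρ : ℝ → ℝ)
    (hρ : ContinuousOn ρ (Set.Icc 0 T)) : ContinuousOn (w7' s ρ) (Set.Icc 0 T) := by
  have hPc : ContinuousOn (P7 s ρ) (Set.Icc 0 T) := contInt7 hT Real.cosh ρ Real.continuous_cosh hρ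
  have hQc : ContinuousOn (Q7 s ρ) (Set.Icc 0 T) := contInt7 hT Real.sinh ρ Real.continuous_sinh hρ
  exact (((Real.continuous_cosh.comp (continuous_const.mul continuous_id))).continuousOn.mul
    hPc).sub
    (((Real.continuous_sinh.comp (continuous_const.mul continuous_id))).continuousOn.mul hQc)

lemma w7_zero (s : ℝ) (ρ : ℝ → ℝ) : w7 s ρ 0 = 0 := by
  simp [w7, P7, Q7]

lemma w7'_zero (s : ℝ) (ρ : ℝ → ℝ) : w7' s ρ 0 = 0 := by
  simp [w7', P7, Q7]

lemma w7_eq {t s : ℝ} (hs : 0 < s) (ht : 0 ≤ t) (ρ : ℝ → ℝ)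
    (hρ : ContinuousOn ρ (Set.Icc 0 t)) :
    w7 s ρ t = ∫ τ in (0:ℝ)..t, Real.sinh (s*(t-τ))/s * ρ τ := by
  have hintc : IntervalIntegrable (fun τ => Real.cosh (s*τ) * ρ τ) volume 0 t := by
    apply ContinuousOn.intervalIntegrable
    rw [Set.uIcc_of_le ht]
    exact (Real.continuous_cosh.comp (continuous_const.mul continuous_id)).continuousOn.mul hρ
  have hints : IntervalIntegrable (fun τ => Real.sinh (s*τ) * ρ τ) volume 0 t := by
    apply ContinuousOn.intervalIntegrable
    rw [Set.uIcc_of_le ht]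
    exact (Real.continuous_sinh.comp (continuous_const.mul continuous_id)).continuousOn.mul hρ
  have h1 : ∀ τ : ℝ, Real.sinh (s*(t-τ))/s * ρ τ =
      Real.sinh (s*t)/s * (Real.cosh (s*τ) * ρ τ) - Real.cosh (s*t)/s * (Real.sinh (s*τ) * ρ τ) := by
    intro τ
    have : s*(t-τ) = s*t - s*τ := by ring
    rw [this, Real.sinh_sub]
    ring
  simp only [h1]
  rw [intervalIntegral.integral_sub ((hintc.const_mul _)) ((hints.const_mul _)),
    intervalIntegral.integral_const_mul, intervalIntegral.integral_const_mul]
  rfl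

lemma gronwall7 (M T : ℝ) (hM : 0 < M) (hT : 0 ≤ T) (g : ℝ → ℝ)
    (hg : ContinuousOn g (Set.Icc 0 T))
    (hineq : ∀ t ∈ Set.Icc 0 T, g t ≤ ∫ τ in (0:ℝ)..t, (t - τ) * (M * g τ)) :
    ∀ t ∈ Set.Icc 0 T, g t ≤ 0 := by
  obtain ⟨C0, hC0⟩ : ∃ C, ∀ τ ∈ Set.Icc 0 T, g τ ≤ C := by
    obtain ⟨C, hC⟩ := (isCompact_Icc.image_of_continuousOn hg).bddAbove
    exact ⟨C, fun τ hτ => hC ⟨τ, hτ, rfl⟩⟩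
  set C := max C0 0 with hCdef
  have hCnn : 0 ≤ C := le_max_right _ _
  have hCb : ∀ τ ∈ Set.Icc 0 T, g τ ≤ C := fun τ hτ => (hC0 τ hτ).trans (le_max_left _ _)
  have key : ∀ n : ℕ, ∀ t ∈ Set.Icc 0 T, g t ≤ C * (M * t^2)^n / (2*n).factorial := by
    intro n
    induction n with
    | zero => simpa using hCb
    | succ n ih =>
      intro t ht
      have htnn : (0:ℝ) ≤ t := ht.1
      have hgsub : ContinuousOn g (Set.Icc 0 t) := hg.mono (Set.Icc_subset_Icc le_rfl ht.2)
      have hint1 : IntervalIntegrable (fun τ => (t-τ)*(M*g τ)) volume 0 t := by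
        apply ContinuousOn.intervalIntegrable
        rw [Set.uIcc_of_le htnn]
        exact (continuousOn_const.sub continuousOn_id).mul (continuousOn_const.mul hgsub)
      have hint2 : IntervalIntegrable
          (fun τ => (t-τ)*(M*(C * (M*τ^2)^n / (2*n).factorial))) volume 0 t :=
        (Continuous.intervalIntegrable (by fun_prop) 0 t)
      have step1 := hineq t ht
      have step2 : (∫ τ in (0:ℝ)..t, (t-τ)*(M*g τ)) ≤
          ∫ τ in (0:ℝ)..t, (t-τ)*(M*(C * (M*τ^2)^n / (2*n).factorial)) := by
        apply intervalIntegral.integral_mono_on htnn hint1 hint2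
        intro τ hτ
        have h1 : g τ ≤ C * (M*τ^2)^n / (2*n).factorial := ih τ ⟨hτ.1, hτ.2.trans ht.2⟩
        have h2 : (0:ℝ) ≤ (t - τ) * M := mul_nonneg (sub_nonneg.mpr hτ.2) hM.le
        nlinarith [h1, h2]
      have hfacne : ((2*n).factorial : ℝ) ≠ 0 := Nat.cast_ne_zero.mpr (Nat.factorial_ne_zero _)
      have comp : (∫ τ in (0:ℝ)..t, (t-τ)*(M*(C * (M*τ^2)^n / (2*n).factorial)))
          = C * (M*t^2)^(n+1) / (2*(n+1)).factorial := by
        have hre : ∀ τ : ℝ, (t-τ)*(M*(C * (M*τ^2)^n / (2*n).factorial)) =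
            (C * M^(n+1) * t / (2*n).factorial) * τ^(2*n)
              - (C * M^(n+1) / (2*n).factorial) * τ^(2*n+1) := by
          intro τ
          rw [mul_pow, ← pow_mul]
          ring
        simp only [hre]
        rw [intervalIntegral.integral_sub ((intervalIntegral.intervalIntegrable_pow _).const_mul _)
          ((intervalIntegral.intervalIntegrable_pow _).const_mul _),
          intervalIntegral.integral_const_mul, intervalIntegral.integral_const_mul,
          integral_pow, integral_pow]
        have hfac : ((2*(n+1)).factorial : ℝ)
            = ((2*n).factorial : ℝ) * ((2*n:ℕ)+1) * ((2*n:ℕ)+2) := by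
          have h : 2*(n+1) = ((2*n)+1)+1 := by ring
          rw [h, Nat.factorial_succ, Nat.factorial_succ]
          push_cast
          ring
        rw [hfac, mul_pow, ← pow_mul]
        have h1 : ((2*n:ℕ):ℝ) + 1 ≠ 0 := by positivity
        have h2 : ((2*n:ℕ):ℝ) + 2 ≠ 0 := by positivity
        field_simp
        simp only [ne_eq, add_eq_zero, one_ne_zero, and_false, not_false_eq_true, zero_pow, sub_zero]
        push_cast
        ring
      calc g t ≤ _ := step1
        _ ≤ _ := step2
        _ = _ := comp
  intro t ht
  have hlim : Filter.Tendsto (fun n : ℕ => C * (M*t^2)^n / (2*n).factorial)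
      Filter.atTop (nhds 0) := by
    have h0 := FloorSemiring.tendsto_pow_div_factorial_atTop (K := ℝ) (M*t^2)
    have h0' := h0.const_mul C
    rw [mul_zero] at h0'
    apply squeeze_zero (fun n => by positivity) (fun n => ?_) h0'
    have hfle : (n.factorial : ℝ) ≤ ((2*n).factorial : ℝ) :=
      Nat.cast_le.mpr (Nat.factorial_le (by omega))
    rw [mul_div_assoc]
    refine mul_le_mul_of_nonneg_left ?_ hCnn
    refine div_le_div_of_nonneg_left ?_ ?_ hfle
    · positivity
    · exact_mod_cast Nat.factorial_pos _
  exact ge_of_tendsto' hlim (fun n => key n t ht)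

lemma repr7 {X : Type*} [NormedAddCommGroup X] [NormedSpace ℝ X] [CompleteSpace X]
    (t : ℝ) (ht : 0 ≤ t) (u v f : ℝ → X)
    (hu : ContinuousOn u (Set.Icc 0 t)) (hv : ContinuousOn v (Set.Icc 0 t))
    (hf : ContinuousOn f (Set.Icc 0 t))
    (hud : ∀ σ ∈ Set.Ioo 0 t, HasDerivWithinAt u (v σ) (Set.Ioi σ) σ)
    (hvd : ∀ σ ∈ Set.Ioo 0 t, HasDerivWithinAt v (f σ) (Set.Ioi σ) σ)
    (h0 : u 0 = 0) (h0' : v 0 = 0) :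
    u t = ∫ τ in (0:ℝ)..t, (t - τ) • f τ := by
  set H : ℝ → X := fun σ => u σ + (t - σ) • v σ with hH
  have hHc : ContinuousOn H (Set.Icc 0 t) :=
    hu.add ((continuousOn_const.sub continuousOn_id).smul hv)
  have hHd : ∀ σ ∈ Set.Ioo 0 t, HasDerivWithinAt H ((t - σ) • f σ) (Set.Ioi σ) σ := by
    intro σ hσ
    have hc : HasDerivWithinAt (fun σ : ℝ => t - σ) (-1) (Set.Ioi σ) σ :=
      (hasDerivWithinAt_id σ _).const_sub t
    have h2 := hc.smul (hvd σ hσ)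
    have h3 := (hud σ hσ).add h2
    refine h3.congr_deriv (Eq.symm ?_)
    simp
  have hint : IntervalIntegrable (fun τ => (t - τ) • f τ) volume 0 t := by
    apply ContinuousOn.intervalIntegrable
    rw [Set.uIcc_of_le ht]
    exact (continuousOn_const.sub continuousOn_id).smul hf
  have key := integral_eq_sub_of_hasDeriv_right_of_le ht hHc hHd hint
  have e1 : H t = u t := by simp [hH]
  have e2 : H 0 = 0 := by simp [hH, h0, h0']
  rw [key, e1, e2, sub_zero]

lemma cii7 {E : Type*} [NormedAddCommGroup E] (t : ℝ) (ht : 0 ≤ t) {f : ℝ → E}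
    (hf : ContinuousOn f (Set.Icc 0 t)) : IntervalIntegrable f MeasureTheory.volume 0 t :=
  ContinuousOn.intervalIntegrable (by rw [Set.uIcc_of_le ht]; exact hf)

/-- Error estimate for the second-order problem `e'' = A e + d` with zero initial data:
`‖e(t)‖ ≤ ∫₀ᵗ sinh(√M (t−τ))/√M · ‖d(τ)‖ dτ` when `‖A‖ ≤ M`. -/
theorem stmt7 {X : Type*} [NormedAddCommGroup X] [NormedSpace ℝ X] [CompleteSpace X]
    (A : X →L[ℝ] X) (M T : ℝ) (hM : 0 < M) (hA : ‖A‖ ≤ M) (hT : 0 ≤ T)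
    (e e' d : ℝ → X) (hd : ContinuousOn d (Set.Icc 0 T))
    (he : ∀ t ∈ Set.Icc 0 T, HasDerivWithinAt e (e' t) (Set.Icc 0 T) t)
    (he' : ∀ t ∈ Set.Icc 0 T, HasDerivWithinAt e' (A (e t) + d t) (Set.Icc 0 T) t)
    (h0 : e 0 = 0) (h0' : e' 0 = 0) :
    ∀ t ∈ Set.Icc 0 T,
      ‖e t‖ ≤ ∫ τ in (0:ℝ)..t, Real.sinh (Real.sqrt M * (t - τ)) / Real.sqrt M * ‖d τ‖ := by
  set s : ℝ := Real.sqrt M with hsdef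
  have hs : 0 < s := Real.sqrt_pos.mpr hM
  have hs2 : s^2 = M := Real.sq_sqrt hM.le
  set ρ : ℝ → ℝ := fun τ => ‖d τ‖ with hρdef
  have hρ : ContinuousOn ρ (Set.Icc 0 T) := hd.norm
  have hec : ContinuousOn e (Set.Icc 0 T) := fun t ht => (he t ht).continuousWithinAt
  have hec' : ContinuousOn e' (Set.Icc 0 T) := fun t ht => (he' t ht).continuousWithinAt
  have hfc : ContinuousOn (fun τ => A (e τ) + d τ) (Set.Icc 0 T) :=
    (A.continuous.comp_continuousOn hec).add hd
  set g : ℝ → ℝ := fun τ => ‖e τ‖ - w7 s ρ τ with hgdef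
  have hwc : ContinuousOn (w7 s ρ) (Set.Icc 0 T) := w7_cont hs hT ρ hρ
  have hgc : ContinuousOn g (Set.Icc 0 T) := hec.norm.sub hwc
  -- membership lemma
  have hmem : ∀ t ∈ Set.Icc 0 T, ∀ σ ∈ Set.Ioo (0:ℝ) t,
      Set.Icc (0:ℝ) T ∈ nhdsWithin σ (Set.Ioi σ) := by
    intro t ht σ hσ
    refine Filter.mem_of_superset (Ioc_mem_nhdsGT_of_mem ⟨le_refl σ, lt_of_lt_of_le hσ.2 ht.2⟩) ?_
    exact fun x hx => ⟨le_of_lt (lt_of_lt_of_le hσ.1 hx.1.le), hx.2⟩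
  have hσmem : ∀ t ∈ Set.Icc 0 T, ∀ σ ∈ Set.Ioo (0:ℝ) t, σ ∈ Set.Icc (0:ℝ) T := by
    intro t ht σ hσ
    exact ⟨hσ.1.le, hσ.2.le.trans ht.2⟩
  have hσmem' : ∀ t ∈ Set.Icc 0 T, ∀ σ ∈ Set.Ioo (0:ℝ) t, σ ∈ Set.Ioo (0:ℝ) T := by
    intro t ht σ hσ
    exact ⟨hσ.1, lt_of_lt_of_le hσ.2 ht.2⟩
  have hineq : ∀ t ∈ Set.Icc 0 T, g t ≤ ∫ τ in (0:ℝ)..t, (t - τ) * (M * g τ) := by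
    intro t ht
    have htnn : (0:ℝ) ≤ t := ht.1
    have hsub : Set.Icc (0:ℝ) t ⊆ Set.Icc (0:ℝ) T := Set.Icc_subset_Icc le_rfl ht.2
    -- representation of e
    have erepr : e t = ∫ τ in (0:ℝ)..t, (t - τ) • (A (e τ) + d τ) := by
      refine repr7 t htnn e e' _ (hec.mono hsub) (hec'.mono hsub) (hfc.mono hsub)
        (fun σ hσ => (he σ (hσmem t ht σ hσ)).mono_of_mem_nhdsWithin (hmem t ht σ hσ))
        (fun σ hσ => (he' σ (hσmem t ht σ hσ)).mono_of_mem_nhdsWithin (hmem t ht σ hσ))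
        h0 h0'
    -- representation of w
    have wrepr : w7 s ρ t = ∫ τ in (0:ℝ)..t, (t - τ) * (M * w7 s ρ τ + ρ τ) := by
      have := repr7 t htnn (w7 s ρ) (w7' s ρ) (fun τ => M * w7 s ρ τ + ρ τ)
        (hwc.mono hsub) ((norm_cont7 hs hT ρ hρ).mono hsub)
        (((continuousOn_const.mul hwc).add hρ).mono hsub)
        (fun σ hσ => w7_hasDeriv hs ρ hρ (hσmem' t ht σ hσ))
        (fun σ hσ => by
          have := w7'_hasDeriv hs ρ hρ (hσmem' t ht σ hσ)
          rwa [hs2] at this)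
        (w7_zero s ρ) (w7'_zero s ρ)
      simpa [smul_eq_mul] using this
    -- norm estimate for e
    have hb1 : ContinuousOn (fun τ => ‖(t - τ) • (A (e τ) + d τ)‖) (Set.Icc 0 t) :=
      (((continuousOn_const.sub continuousOn_id).smul (hfc.mono hsub))).norm
    have hb2 : ContinuousOn (fun τ => (t - τ) * (M * ‖e τ‖ + ρ τ)) (Set.Icc 0 t) :=
      (continuousOn_const.sub continuousOn_id).mul
        ((continuousOn_const.mul (hec.mono hsub).norm).add (hρ.mono hsub))
    have enorm : ‖e t‖ ≤ ∫ τ in (0:ℝ)..t, (t - τ) * (M * ‖e τ‖ + ρ τ) := by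
      rw [erepr]
      refine (intervalIntegral.norm_integral_le_integral_norm htnn).trans ?_
      refine intervalIntegral.integral_mono_on htnn
        (cii7 t htnn hb1)
        (cii7 t htnn hb2) ?_
      intro τ hτ
      have h1 : ‖(t - τ) • (A (e τ) + d τ)‖ = (t - τ) * ‖A (e τ) + d τ‖ := by
        rw [norm_smul, Real.norm_eq_abs, abs_of_nonneg (sub_nonneg.mpr hτ.2)]
      rw [h1]
      refine mul_le_mul_of_nonneg_left ?_ (sub_nonneg.mpr hτ.2)
      refine (norm_add_le _ _).trans ?_
      have h2 : ‖A (e τ)‖ ≤ M * ‖e τ‖ :=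
        (A.le_opNorm _).trans (mul_le_mul_of_nonneg_right hA (norm_nonneg _))
      exact add_le_add h2 le_rfl
    -- difference
    have hint1 : IntervalIntegrable (fun τ => (t - τ) * (M * ‖e τ‖ + ρ τ)) volume 0 t :=
      cii7 t htnn hb2
    have hint2 : IntervalIntegrable (fun τ => (t - τ) * (M * w7 s ρ τ + ρ τ)) volume 0 t :=
      cii7 t htnn (((continuousOn_const.sub continuousOn_id).mul
        ((continuousOn_const.mul (hwc.mono hsub)).add (hρ.mono hsub))))
    have hdiff : (∫ τ in (0:ℝ)..t, (t - τ) * (M * ‖e τ‖ + ρ τ))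
        - (∫ τ in (0:ℝ)..t, (t - τ) * (M * w7 s ρ τ + ρ τ))
        = ∫ τ in (0:ℝ)..t, (t - τ) * (M * g τ) := by
      rw [← intervalIntegral.integral_sub hint1 hint2]
      congr 1
      funext τ
      simp only [hgdef]
      ring
    have : g t = ‖e t‖ - w7 s ρ t := rfl
    rw [this, wrepr, ← hdiff]
    have := sub_le_sub_right enorm ((∫ τ in (0:ℝ)..t, (t - τ) * (M * w7 s ρ τ + ρ τ)))
    linarith [enorm]
  -- Gronwall
  have hg0 := gronwall7 M T hM hT g hgc hineq
  intro t ht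
  have h1 : ‖e t‖ ≤ w7 s ρ t := by
    have := hg0 t ht
    simp only [hgdef] at this
    linarith
  have h2 : w7 s ρ t = ∫ τ in (0:ℝ)..t, Real.sinh (s*(t-τ))/s * ρ τ :=
    w7_eq hs ht.1 ρ (hρ.mono (Set.Icc_subset_Icc le_rfl ht.2))
  rw [h2] at h1
  exact h1
end

section
/- Let Ω ⊂ ℝⁿ be bounded and measurable, Y = [0,1)ⁿ, 1 ≤ p < ∞, and ψ ∈ C_c(ℝⁿ × ℝⁿ) with ψ(x, ·) Y-periodic for each x. Then lim_{ε→0} ∫_Ω |ψ(x, x/ε)|^p dx = ∫_Ω ∫_Y |ψ(x,y)|^p dy dx. -/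
set_option maxHeartbeats 1000000
open MeasureTheory Real Filter

namespace Stmt11Aux

variable {n : ℕ}

noncomputable def bE (n : ℕ) : Module.Basis (Fin n) ℝ (EuclideanSpace ℝ (Fin n)) :=
  (EuclideanSpace.basisFun (Fin n) ℝ).toBasis

def Yset (n : ℕ) : Set (EuclideanSpace ℝ (Fin n)) :=
  {y | ∀ i, y i ∈ Set.Ico (0:ℝ) 1}

noncomputable def intvec (k : Fin n → ℤ) : EuclideanSpace ℝ (Fin n) :=
  (WithLp.equiv 2 (Fin n → ℝ)).symm (fun i => (k i : ℝ))

lemma bE_repr (x : EuclideanSpace ℝ (Fin n)) (i : Fin n) : (bE n).repr x i = x i := by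
  rw [bE, OrthonormalBasis.coe_toBasis_repr_apply, EuclideanSpace.basisFun_repr]

lemma Yset_eq : Yset n = ZSpan.fundamentalDomain (bE n) := by
  ext y
  simp [Yset, ZSpan.mem_fundamentalDomain, bE_repr]

lemma measurableSet_Yset : MeasurableSet (Yset n) := by
  rw [Yset_eq]; exact ZSpan.fundamentalDomain_measurableSet _

lemma mem_lat {v : EuclideanSpace ℝ (Fin n)}
    (hv : v ∈ Submodule.span ℤ (Set.range (bE n))) :
    ∃ k : Fin n → ℤ, v = intvec k := by
  have h := fun i => ((bE n).mem_span_iff_repr_mem ℤ _).mp hv i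
  choose k hk using h
  refine ⟨k, ?_⟩
  ext i
  have := hk i
  rw [bE_repr] at this
  simpa [intvec] using this.symm

lemma volume_Yset : volume (Yset n) = 1 := by
  have h := (EuclideanSpace.volume_preserving_symm_measurableEquiv_toLp (Fin n)).measure_preimage
    (s := Set.pi Set.univ fun _ : Fin n => Set.Ico (0:ℝ) 1)
    ((MeasurableSet.univ_pi fun _ => measurableSet_Ico).nullMeasurableSet)
  have e : (MeasurableEquiv.toLp 2 (Fin n → ℝ)).symm ⁻¹'
      (Set.pi Set.univ fun _ : Fin n => Set.Ico (0:ℝ) 1) = Yset n := by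
    ext y; simp [Set.mem_pi, Yset]
  rw [e] at h
  rw [h, volume_pi_pi]
  simp

lemma norm_le_sqrt_of_mem_Yset {y : EuclideanSpace ℝ (Fin n)} (hy : y ∈ Yset n) :
    ‖y‖ ≤ Real.sqrt n := by
  rw [EuclideanSpace.norm_eq]
  apply Real.sqrt_le_sqrt
  calc ∑ i, ‖y i‖ ^ 2 ≤ ∑ _i : Fin n, 1 := by
        apply Finset.sum_le_sum
        intro i _
        have h1 := (hy i).1; have h2 := (hy i).2
        rw [Real.norm_eq_abs, sq_abs]
        nlinarith
    _ = n := by simp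

lemma shift_integral (f : EuclideanSpace ℝ (Fin n) → ℝ)
    (hinv : ∀ (v : EuclideanSpace ℝ (Fin n)), v ∈ Submodule.span ℤ (Set.range (bE n)) →
      ∀ x, f (v + x) = f x)
    (c : EuclideanSpace ℝ (Fin n)) :
    ∫ t in Yset n, f (c + t) = ∫ y in Yset n, f y := by
  classical
  set L := (Submodule.span ℤ (Set.range (bE n))).toAddSubgroup with hL
  have hY : IsAddFundamentalDomain L (Yset n) volume := by
    rw [Yset_eq]; exact ZSpan.isAddFundamentalDomain' (bE n) volume
  set S : Set (EuclideanSpace ℝ (Fin n)) := (fun x => x - c) ⁻¹' (Yset n) with hS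
  have hSFD : IsAddFundamentalDomain L S volume := by
    refine hY.preimage_of_equiv (f := fun x => x - c)
      (measurePreserving_sub_right volume c).quasiMeasurePreserving
      (e := id) Function.bijective_id (fun γ x => ?_)
    show (γ +ᵥ x) - c = γ +ᵥ (x - c)
    show ((γ : EuclideanSpace ℝ (Fin n)) + x) - c = (γ : EuclideanSpace ℝ (Fin n)) + (x - c)
    abel
  have : Countable L := by
    change Countable (Submodule.span ℤ (Set.range (bE n)))
    infer_instance
  have hfinv : ∀ (γ : L) (x : EuclideanSpace ℝ (Fin n)), f (γ +ᵥ x) = f x := by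
    intro γ x
    exact hinv γ γ.2 x
  have h1 : ∫ x in S, f x = ∫ y in Yset n, f y := hSFD.setIntegral_eq hY hfinv
  rw [← h1]
  have h2 : ∀ t, (Yset n).indicator (fun t => f (c + t)) t = S.indicator f (c + t) := by
    intro t
    by_cases ht : t ∈ Yset n
    · rw [Set.indicator_of_mem ht, Set.indicator_of_mem (by simp [hS, ht])]
    · rw [Set.indicator_of_notMem ht, Set.indicator_of_notMem (by simp [hS, ht])]
  have hYm : MeasurableSet (Yset n) := measurableSet_Yset
  have hSm : MeasurableSet S := hYm.preimage (by fun_prop)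
  rw [← integral_indicator hYm, ← integral_indicator hSm]
  calc ∫ t, (Yset n).indicator (fun t => f (c + t)) t
      = ∫ t, S.indicator f (c + t) := by simp_rw [h2]
    _ = ∫ u, S.indicator f u := integral_add_left_eq_self _ c

lemma UC (g : EuclideanSpace ℝ (Fin n) → EuclideanSpace ℝ (Fin n) → ℝ)
    (hgc : Continuous fun q : EuclideanSpace ℝ (Fin n) × EuclideanSpace ℝ (Fin n) => g q.1 q.2)
    (R : ℝ)
    (hgs : ∀ x : EuclideanSpace ℝ (Fin n), R < ‖x‖ → ∀ y, g x y = 0)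
    (hred : ∀ y : EuclideanSpace ℝ (Fin n), ∃ y', ‖y'‖ ≤ Real.sqrt n ∧ ∀ x, g x y = g x y')
    (η : ℝ) (hη : 0 < η) :
    ∃ δ : ℝ, 0 < δ ∧ δ ≤ 1 ∧ ∀ (x s y : EuclideanSpace ℝ (Fin n)), ‖s‖ ≤ δ →
      |g (x + s) y - g x y| ≤ η := by
  classical
  set C := (Metric.closedBall (0 : EuclideanSpace ℝ (Fin n)) (R+2)) ×ˢ
    (Metric.closedBall (0 : EuclideanSpace ℝ (Fin n)) (Real.sqrt n)) with hC
  have hCcomp : IsCompact C := (isCompact_closedBall _ _).prod (isCompact_closedBall _ _)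
  have huc := hCcomp.uniformContinuousOn_of_continuous hgc.continuousOn
  rw [Metric.uniformContinuousOn_iff_le] at huc
  obtain ⟨δ, hδ0, hδ⟩ := huc η hη
  refine ⟨min δ 1, lt_min hδ0 one_pos, min_le_right _ _, ?_⟩
  intro x s y hs
  obtain ⟨y', hy'n, hy'⟩ := hred y
  rw [hy' (x + s), hy' x]
  by_cases hx : ‖x‖ ≤ R + 1
  · have h1 : (x + s, y') ∈ C := by
      constructor
      · simp only [Metric.mem_closedBall, dist_zero_right]
        calc ‖x + s‖ ≤ ‖x‖ + ‖s‖ := norm_add_le _ _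
          _ ≤ (R+1) + 1 := add_le_add hx (hs.trans (min_le_right _ _))
          _ = R + 2 := by ring
      · simpa [dist_zero_right] using hy'n
    have h2 : (x, y') ∈ C := by
      constructor
      · simp only [Metric.mem_closedBall, dist_zero_right]
        linarith
      · simpa [dist_zero_right] using hy'n
    have hd : dist ((x+s, y') : EuclideanSpace ℝ (Fin n) × EuclideanSpace ℝ (Fin n)) (x, y') ≤ δ := by
      rw [Prod.dist_eq]
      simp only [dist_self, dist_eq_norm]
      have : ‖x + s - x‖ = ‖s‖ := by congr 1; abel
      rw [this]
      exact max_le (hs.trans (min_le_left _ _)) (le_of_lt hδ0)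
    have := hδ _ h1 _ h2 hd
    rwa [Real.dist_eq] at this
  · push_neg at hx
    have hx' : R < ‖x‖ := by linarith
    have hxs : R < ‖x + s‖ := by
      have : ‖x‖ - ‖s‖ ≤ ‖x + s‖ := by
        have h4 := norm_add_le (x + s) (-s)
        rw [(by abel : (x + s) + -s = x), norm_neg] at h4
        linarith
      have hs1 : ‖s‖ ≤ 1 := hs.trans (min_le_right _ _)
      linarith
    rw [hgs x hx' y', hgs (x+s) hxs y']
    simpa using le_of_lt hη

lemma TCL (Ω : Set (EuclideanSpace ℝ (Fin n)))
    (hΩb : Bornology.IsBounded Ω) (hΩm : MeasurableSet Ω)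
    (η : ℝ) (hη : 0 < η) :
    ∃ r : ℝ, 0 < r ∧ ∀ s : EuclideanSpace ℝ (Fin n), ‖s‖ ≤ r →
      (∫ x, |Ω.indicator (fun _ => (1:ℝ)) (x + s) - Ω.indicator (fun _ => (1:ℝ)) x|) ≤ η := by
  classical
  set ind := Ω.indicator (fun _ => (1:ℝ)) with hind
  have hΩfin : volume Ω < ⊤ := hΩb.measure_lt_top
  have hindint : Integrable ind := by
    rw [hind, integrable_indicator_iff hΩm]
    exact integrableOn_const hΩfin.ne
  obtain ⟨u, hu_supp, hu_close, hu_cont, hu_int⟩ :=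
    hindint.exists_hasCompactSupport_integral_sub_le (by positivity : (0:ℝ) < η/3)
  have huc : UniformContinuous u := hu_supp.uniformContinuous_of_continuous hu_cont
  set T := Metric.cthickening 1 (tsupport u) with hT
  have hTcomp : IsCompact T := hu_supp.cthickening
  have hTfin : volume T < ⊤ := hTcomp.isBounded.measure_lt_top
  set VT := (volume T).toReal with hVT
  have hVT0 : 0 ≤ VT := ENNReal.toReal_nonneg
  rw [Metric.uniformContinuous_iff] at huc
  obtain ⟨δ, hδ0, hδ⟩ := huc (η/(3*(VT+1))) (by positivity)
  refine ⟨min (δ/2) 1, lt_min (by positivity) one_pos, ?_⟩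
  intro s hs
  have hs1 : ‖s‖ ≤ 1 := hs.trans (min_le_right _ _)
  have hsδ : ‖s‖ < δ := lt_of_le_of_lt (hs.trans (min_le_left _ _)) (by linarith)
  have hA : Integrable (fun x => |ind (x + s) - u (x + s)|) :=
    ((hindint.sub hu_int).comp_add_right s).abs
  have hB : Integrable (fun x => |u (x + s) - u x|) :=
    ((hu_int.comp_add_right s).sub hu_int).abs
  have hCint : Integrable (fun x => |u x - ind x|) := (hu_int.sub hindint).abs
  have hLHS : Integrable (fun x => |ind (x + s) - ind x|) :=
    ((hindint.comp_add_right s).sub hindint).abs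
  have tri : ∀ x, |ind (x + s) - ind x| ≤
      |ind (x + s) - u (x + s)| + |u (x + s) - u x| + |u x - ind x| := by
    intro x
    have : ind (x+s) - ind x = (ind (x+s) - u (x+s)) + (u (x+s) - u x) + (u x - ind x) := by ring
    rw [this]
    exact (abs_add_le _ _).trans (by gcongr; exact abs_add_le _ _)
  have hmono := integral_mono hLHS ((hA.add hB).add hCint) tri
  simp only [Pi.add_apply] at hmono
  have hAB : Integrable (fun x => |ind (x + s) - u (x + s)| + |u (x + s) - u x|) := hA.add hB
  rw [integral_add hAB hCint, integral_add hA hB] at hmono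
  have e1 : (∫ x, |ind (x + s) - u (x + s)|) ≤ η/3 := by
    have := integral_add_right_eq_self (μ := volume) (fun x => |ind x - u x|) s
    rw [this]
    simpa [Real.norm_eq_abs] using hu_close
  have e3 : (∫ x, |u x - ind x|) ≤ η/3 := by
    have : (fun x => |u x - ind x|) = fun x => |ind x - u x| := by
      funext x; rw [abs_sub_comm]
    rw [this]
    simpa [Real.norm_eq_abs] using hu_close
  have e2 : (∫ x, |u (x + s) - u x|) ≤ η/3 := by
    have hzero : ∀ x, x ∉ T → |u (x + s) - u x| = 0 := by
      intro x hx
      have hx1 : x ∉ tsupport u := fun h => hx (Metric.self_subset_cthickening _ h)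
      have hx2 : x + s ∉ tsupport u := by
        intro h
        apply hx
        apply Metric.mem_cthickening_of_dist_le x (x+s) 1 _ h
        rw [dist_eq_norm]
        simpa using hs1
      rw [image_eq_zero_of_notMem_tsupport hx1, image_eq_zero_of_notMem_tsupport hx2]
      simp
    rw [← setIntegral_eq_integral_of_forall_compl_eq_zero hzero]
    have hb : ∀ x ∈ T, |u (x + s) - u x| ≤ η/(3*(VT+1)) := by
      intro x _
      have := hδ (a := x + s) (b := x) (by rw [dist_eq_norm]; simpa using hsδ)
      rw [Real.dist_eq] at this
      exact le_of_lt this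
    calc (∫ x in T, |u (x + s) - u x|)
        ≤ ∫ _x in T, η/(3*(VT+1)) := by
          apply setIntegral_mono_on _ (integrableOn_const hTfin.ne) hTcomp.measurableSet hb
          exact hB.integrableOn
      _ = VT * (η/(3*(VT+1))) := by rw [setIntegral_const]; simp [hVT, smul_eq_mul, Measure.real]
      _ ≤ (VT+1) * (η/(3*(VT+1))) := by gcongr; linarith
      _ = η/3 := by field_simp
  linarith

end Stmt11Aux
namespace Stmt11Aux
open MeasureTheory Real Filter

theorem main {n : ℕ} (Ω : Set (EuclideanSpace ℝ (Fin n)))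
    (hΩb : Bornology.IsBounded Ω) (hΩm : MeasurableSet Ω)
    (g : EuclideanSpace ℝ (Fin n) → EuclideanSpace ℝ (Fin n) → ℝ)
    (hgc : Continuous fun q : EuclideanSpace ℝ (Fin n) × EuclideanSpace ℝ (Fin n) => g q.1 q.2)
    (M : ℝ) (hM0 : 0 ≤ M) (hM : ∀ x y, |g x y| ≤ M)
    (R : ℝ) (hgs : ∀ x : EuclideanSpace ℝ (Fin n), R < ‖x‖ → ∀ y, g x y = 0)
    (hinv : ∀ x (v : EuclideanSpace ℝ (Fin n)),
      v ∈ Submodule.span ℤ (Set.range (bE n)) → ∀ y, g x (v + y) = g x y) :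
    Tendsto (fun ε : ℝ => ∫ x in Ω, g x (ε⁻¹ • x)) (nhdsWithin 0 (Set.Ioi 0))
      (nhds (∫ x in Ω, ∫ y in Yset n, g x y)) := by
  classical
  set ind := Ω.indicator (fun _ => (1:ℝ)) with hind_def
  have hind_meas : Measurable ind := measurable_const.indicator hΩm
  have hind01 : ∀ x, ind x = 0 ∨ ind x = 1 := by
    intro x; by_cases h : x ∈ Ω
    · right; simp [hind_def, h]
    · left; simp [hind_def, h]
  have hind_nonneg : ∀ x, 0 ≤ ind x := by
    intro x; rcases hind01 x with h | h <;> rw [h] <;> norm_num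
  have hind_le1 : ∀ x, ind x ≤ 1 := by
    intro x; rcases hind01 x with h | h <;> rw [h] <;> norm_num
  have hΩfin : volume Ω < ⊤ := hΩb.measure_lt_top
  have hindint : Integrable ind := by
    rw [hind_def, integrable_indicator_iff hΩm]
    exact integrableOn_const hΩfin.ne
  set VΩ := (volume Ω).toReal with hVΩ
  have hVΩ0 : 0 ≤ VΩ := ENNReal.toReal_nonneg
  have hind_integral : ∫ x, ind x = VΩ := integral_indicator_one hΩm
  -- indicator trick
  have ind_mul : ∀ (f : EuclideanSpace ℝ (Fin n) → ℝ),
      ∫ x in Ω, f x = ∫ x, ind x * f x := by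
    intro f
    rw [← integral_indicator hΩm]
    congr 1
    funext x
    by_cases h : x ∈ Ω
    · simp [hind_def, h]
    · simp [hind_def, h]
  -- reduction to fundamental domain
  have hred : ∀ y : EuclideanSpace ℝ (Fin n), ∃ y', ‖y'‖ ≤ Real.sqrt n ∧
      ∀ x, g x y = g x y' := by
    intro y
    refine ⟨ZSpan.fract (bE n) y, ?_, ?_⟩
    · exact norm_le_sqrt_of_mem_Yset (Yset_eq ▸ ZSpan.fract_mem_fundamentalDomain (bE n) y)
    · intro x
      have : y = (ZSpan.floor (bE n) y : EuclideanSpace ℝ (Fin n)) + ZSpan.fract (bE n) y := by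
        rw [ZSpan.fract_apply]; abel
      conv_lhs => rw [this]
      exact hinv x _ (Submodule.coe_mem _) _
  -- the measure of Yset
  have hYm : MeasurableSet (Yset n) := measurableSet_Yset
  have hYvol : volume (Yset n) = 1 := volume_Yset
  have hYfin : volume (Yset n) < ⊤ := by rw [hYvol]; exact ENNReal.one_lt_top
  -- main estimate
  rw [Metric.tendsto_nhdsWithin_nhds]
  intro η hη
  obtain ⟨δ₁, hδ₁0, hδ₁1, hδ₁⟩ := UC g hgc R hgs hred (η/(3*(VΩ+1))) (by positivity)
  obtain ⟨r, hr0, hr⟩ := TCL Ω hΩb hΩm (η/(3*(M+1))) (by positivity)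
  refine ⟨min δ₁ r / (Real.sqrt n + 1), by positivity, ?_⟩
  intro ε hε hεd
  rw [Set.mem_Ioi] at hε
  rw [Real.dist_eq, sub_zero, abs_of_pos hε] at hεd
  have hsqn : (0:ℝ) ≤ Real.sqrt n := Real.sqrt_nonneg _
  -- the smallness of ε • t for t ∈ Yset
  have hsmall : ∀ t ∈ Yset n, ‖ε • t‖ ≤ min δ₁ r := by
    intro t ht
    rw [norm_smul, Real.norm_eq_abs, abs_of_pos hε]
    calc ε * ‖t‖ ≤ ε * Real.sqrt n := by
          exact mul_le_mul_of_nonneg_left (norm_le_sqrt_of_mem_Yset ht) (le_of_lt hε)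
      _ ≤ ε * (Real.sqrt n + 1) := by nlinarith
      _ ≤ min δ₁ r := by
          rw [← div_mul_cancel₀ (min δ₁ r) (by positivity : Real.sqrt n + 1 ≠ 0)]
          exact mul_le_mul_of_nonneg_right (le_of_lt hεd) (by positivity)
  -- basic facts for this ε
  have hεne : ε ≠ 0 := ne_of_gt hε
  have hgm : Measurable fun p : EuclideanSpace ℝ (Fin n) × EuclideanSpace ℝ (Fin n) =>
      g p.1 p.2 := hgc.measurable
  set η₁ := η/(3*(VΩ+1)) with hη₁
  set η₂ := η/(3*(M+1)) with hη₂
  -- key integrability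
  have key_int : ∀ u : EuclideanSpace ℝ (Fin n) → EuclideanSpace ℝ (Fin n), Measurable u →
      Integrable (fun x => ind x * g x (u x)) := by
    intro u hu
    apply Integrable.mono' (hindint.mul_const M)
    · exact (hind_meas.mul (hgm.comp (measurable_id.prodMk hu))).aestronglyMeasurable
    · filter_upwards with x
      rw [Real.norm_eq_abs, abs_mul, abs_of_nonneg (hind_nonneg x)]
      exact mul_le_mul_of_nonneg_left (hM _ _) (hind_nonneg x)
  set φ : EuclideanSpace ℝ (Fin n) → ℝ := fun x => ind x * g x (ε⁻¹ • x) with hφdef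
  have hφint : Integrable φ := key_int _ (measurable_const_smul ε⁻¹)
  have hsmul_id : ∀ (x t : EuclideanSpace ℝ (Fin n)),
      ε⁻¹ • (x + ε • t) = ε⁻¹ • x + t := by
    intro x t
    rw [smul_add, smul_smul, inv_mul_cancel₀ hεne, one_smul]
  -- the two families of integrands
  set a : EuclideanSpace ℝ (Fin n) → EuclideanSpace ℝ (Fin n) → ℝ :=
    fun t x => ind (x + ε • t) * g (x + ε • t) (ε⁻¹ • x + t) with hadef
  set b : EuclideanSpace ℝ (Fin n) → EuclideanSpace ℝ (Fin n) → ℝ :=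
    fun t x => ind x * g x (ε⁻¹ • x + t) with hbdef
  have ha_eq : ∀ t x, a t x = φ (x + ε • t) := by
    intro t x
    rw [hadef, hφdef]
    simp only
    rw [hsmul_id]
  have hat : ∀ t, Integrable (a t) := by
    intro t
    have := hφint.comp_add_right (ε • t)
    apply this.congr
    filter_upwards with x
    rw [ha_eq]
  have hbt : ∀ t, Integrable (b t) := by
    intro t
    exact key_int _ ((measurable_const_smul ε⁻¹).add_const t)
  have hAconst : ∀ t, ∫ x, a t x = ∫ x in Ω, g x (ε⁻¹ • x) := by
    intro t
    rw [ind_mul]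
    calc ∫ x, a t x = ∫ x, φ (x + ε • t) := by simp_rw [ha_eq]
      _ = ∫ x, φ x := integral_add_right_eq_self φ (ε • t)
  -- L = ∫ t in Y, B t
  haveI hYfinM : IsFiniteMeasure (volume.restrict (Yset n)) := by
    constructor
    rw [Measure.restrict_apply_univ, hYvol]
    exact ENNReal.one_lt_top
  have hprod : Integrable (Function.uncurry fun x t => ind x * g x (ε⁻¹ • x + t))
      (volume.prod (volume.restrict (Yset n))) := by
    apply Integrable.mono' ((hindint.mul_const 1).mul_prod (integrable_const M))
    · apply Measurable.aestronglyMeasurable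
      apply Measurable.mul
      · exact hind_meas.comp measurable_fst
      · exact hgm.comp (measurable_fst.prodMk
          ((measurable_fst.const_smul ε⁻¹).add measurable_snd))
    · filter_upwards with p
      show ‖ind p.1 * g p.1 (ε⁻¹ • p.1 + p.2)‖ ≤ ind p.1 * 1 * M
      rw [Real.norm_eq_abs, abs_mul, abs_of_nonneg (hind_nonneg p.1), mul_one]
      exact mul_le_mul (le_refl _) (hM _ _) (abs_nonneg _) (hind_nonneg _)
  have hL_eq : ∫ x in Ω, ∫ y in Yset n, g x y = ∫ t in Yset n, ∫ x, b t x := by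
    rw [ind_mul]
    have step1 : ∀ x, ind x * ∫ y in Yset n, g x y
        = ∫ t in Yset n, ind x * g x (ε⁻¹ • x + t) := by
      intro x
      rw [← shift_integral (g x) (hinv x) (ε⁻¹ • x)]
      exact (integral_const_mul _ _).symm
    calc ∫ x, ind x * ∫ y in Yset n, g x y
        = ∫ x, ∫ t in Yset n, ind x * g x (ε⁻¹ • x + t) := by simp_rw [step1]
      _ = ∫ t in Yset n, ∫ x, ind x * g x (ε⁻¹ • x + t) := integral_integral_swap hprod
  have hBint : Integrable (fun t => ∫ x, b t x) (volume.restrict (Yset n)) :=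
    hprod.integral_prod_right
  -- F as integral over Y
  have hF_eq : ∫ x in Ω, g x (ε⁻¹ • x) = ∫ t in Yset n, ∫ x, a t x := by
    have : (fun t => ∫ x, a t x) = fun _ => ∫ x in Ω, g x (ε⁻¹ • x) := by
      funext t; rw [hAconst]
    rw [this, setIntegral_const, Measure.real, hYvol]
    simp
  -- pointwise bound
  have hpt : ∀ t ∈ Yset n, ‖(∫ x, a t x) - ∫ x, b t x‖ ≤ η₁ * VΩ + M * η₂ := by
    intro t ht
    have hst := hsmall t ht
    have hstδ : ‖ε • t‖ ≤ δ₁ := hst.trans (min_le_left _ _)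
    have hstr : ‖ε • t‖ ≤ r := hst.trans (min_le_right _ _)
    rw [← integral_sub (hat t) (hbt t)]
    set bnd : EuclideanSpace ℝ (Fin n) → ℝ :=
      fun x => η₁ * ind (x + ε • t) + M * |ind (x + ε • t) - ind x| with hbnd
    have hbndint : Integrable bnd :=
      ((hindint.comp_add_right (ε • t)).const_mul η₁).add
        (((hindint.comp_add_right (ε • t)).sub hindint).abs.const_mul M)
    have hptwise : ∀ x, ‖a t x - b t x‖ ≤ bnd x := by
      intro x
      rw [Real.norm_eq_abs]
      have expand : a t x - b t x
          = ind (x + ε • t) * (g (x + ε • t) (ε⁻¹ • x + t) - g x (ε⁻¹ • x + t))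
            + (ind (x + ε • t) - ind x) * g x (ε⁻¹ • x + t) := by
        rw [hadef, hbdef]; ring
      rw [expand]
      apply (abs_add_le _ _).trans
      rw [hbnd]
      simp only
      apply add_le_add
      · rw [abs_mul, abs_of_nonneg (hind_nonneg _), mul_comm η₁ _]
        apply mul_le_mul_of_nonneg_left _ (hind_nonneg _)
        exact hδ₁ x (ε • t) (ε⁻¹ • x + t) hstδ
      · rw [abs_mul, mul_comm]
        exact mul_le_mul_of_nonneg_right (hM _ _) (abs_nonneg _)
    calc ‖∫ x, (a t x - b t x)‖ ≤ ∫ x, ‖a t x - b t x‖ := norm_integral_le_integral_norm _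
      _ ≤ ∫ x, bnd x := by
          apply integral_mono _ hbndint hptwise
          exact ((hat t).sub (hbt t)).norm
      _ = η₁ * (∫ x, ind (x + ε • t)) + M * (∫ x, |ind (x + ε • t) - ind x|) := by
          have h1 : Integrable (fun x => η₁ * ind (x + ε • t)) volume :=
            (hindint.comp_add_right (ε • t)).const_mul η₁
          have h2 : Integrable (fun x => M * |ind (x + ε • t) - ind x|) volume :=
            ((hindint.comp_add_right (ε • t)).sub hindint).abs.const_mul M
          rw [hbnd, integral_add h1 h2, integral_const_mul, integral_const_mul]
      _ ≤ η₁ * VΩ + M * η₂ := by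
          apply add_le_add
          · rw [integral_add_right_eq_self ind (ε • t), hind_integral]
          · exact mul_le_mul_of_nonneg_left (hr (ε • t) hstr) hM0
  -- conclusion
  rw [Real.dist_eq, hF_eq, hL_eq]
  have hsub : (∫ t in Yset n, ∫ x, a t x) - (∫ t in Yset n, ∫ x, b t x)
      = ∫ t in Yset n, ((∫ x, a t x) - ∫ x, b t x) := by
    rw [integral_sub _ hBint]
    have : (fun t => ∫ x, a t x) = fun _ => ∫ x in Ω, g x (ε⁻¹ • x) := by
      funext t; rw [hAconst]
    rw [this]
    exact integrableOn_const hYfin.ne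
  rw [hsub]
  have := norm_setIntegral_le_of_norm_le_const hYfin hpt
  rw [Measure.real, hYvol] at this
  simp only [ENNReal.toReal_one, mul_one] at this
  rw [Real.norm_eq_abs] at this
  calc |∫ t in Yset n, ((∫ x, a t x) - ∫ x, b t x)| ≤ η₁ * VΩ + M * η₂ := this
    _ ≤ η/3 + η/3 := by
        apply add_le_add
        · rw [hη₁]
          rw [div_mul_eq_mul_div, div_le_div_iff₀ (by positivity) (by norm_num)]
          nlinarith
        · rw [hη₂]
          rw [mul_comm, div_mul_eq_mul_div, div_le_div_iff₀ (by positivity) (by norm_num)]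
          nlinarith
    _ < η := by linarith


end Stmt11Aux

/-- Mean-value property of rapidly oscillating periodic functions: for `ψ ∈ C_c(ℝⁿ × ℝⁿ)`
which is `Y`-periodic in its second variable,
`∫_Ω |ψ(x, x/ε)|^p dx → ∫_Ω ∫_Y |ψ(x,y)|^p dy dx` as `ε → 0⁺`. -/
theorem stmt11 (n : ℕ) (Ω : Set (EuclideanSpace ℝ (Fin n)))
    (hΩb : Bornology.IsBounded Ω) (hΩm : MeasurableSet Ω)
    (p : ℝ) (hp1 : 1 ≤ p)
    (ψ : EuclideanSpace ℝ (Fin n) → EuclideanSpace ℝ (Fin n) → ℝ)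
    (hψc : Continuous fun q : EuclideanSpace ℝ (Fin n) × EuclideanSpace ℝ (Fin n) =>
      ψ q.1 q.2)
    (hψs : ∃ K : Set (EuclideanSpace ℝ (Fin n)), IsCompact K ∧
      ∀ x ∉ K, ∀ y, ψ x y = 0)
    (hper : ∀ x y (k : Fin n → ℤ),
      ψ x (y + (WithLp.equiv 2 (Fin n → ℝ)).symm (fun i => (k i : ℝ))) = ψ x y) :
    Tendsto (fun ε : ℝ => ∫ x in Ω, |ψ x (ε⁻¹ • x)| ^ p)
      (nhdsWithin 0 (Set.Ioi 0))
      (nhds (∫ x in Ω,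
        ∫ y in {y : EuclideanSpace ℝ (Fin n) | ∀ i, y i ∈ Set.Ico (0:ℝ) 1},
          |ψ x y| ^ p)) := by
  classical
  obtain ⟨K, hK, hKs⟩ := hψs
  have hp0 : (0:ℝ) < p := lt_of_lt_of_le one_pos hp1
  -- periodicity in ZSpan form for ψ
  have hψinv : ∀ x (v : EuclideanSpace ℝ (Fin n)),
      v ∈ Submodule.span ℤ (Set.range (Stmt11Aux.bE n)) → ∀ y, ψ x (v + y) = ψ x y := by
    intro x v hv y
    obtain ⟨k, rfl⟩ := Stmt11Aux.mem_lat hv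
    rw [add_comm]
    exact hper x y k
  -- bound for ψ
  obtain ⟨R, hR⟩ := hK.isBounded.subset_closedBall 0
  obtain ⟨C, hC⟩ := ((hK.prod (isCompact_closedBall (0 : EuclideanSpace ℝ (Fin n))
    (Real.sqrt n)))).exists_bound_of_continuousOn hψc.continuousOn
  set C' := max C 0 with hC'
  have hψbdd : ∀ x y, |ψ x y| ≤ C' := by
    intro x y
    by_cases hx : x ∈ K
    · -- reduce y
      set y' := ZSpan.fract (Stmt11Aux.bE n) y with hy'
      have hyy' : ψ x y = ψ x y' := by
        have hfl : y = ((ZSpan.floor (Stmt11Aux.bE n) y : EuclideanSpace ℝ (Fin n))) + y' := by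
          rw [hy', ZSpan.fract_apply]; abel
        conv_lhs => rw [hfl]
        exact hψinv x _ (Submodule.coe_mem _) _
      have hy'mem : y' ∈ Metric.closedBall (0 : EuclideanSpace ℝ (Fin n)) (Real.sqrt n) := by
        rw [Metric.mem_closedBall, dist_zero_right]
        exact Stmt11Aux.norm_le_sqrt_of_mem_Yset
          (Stmt11Aux.Yset_eq ▸ ZSpan.fract_mem_fundamentalDomain (Stmt11Aux.bE n) y)
      have := hC (x, y') ⟨hx, hy'mem⟩
      rw [Real.norm_eq_abs] at this
      rw [hyy']
      exact this.trans (le_max_left _ _)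
    · rw [hKs x hx y]
      simp [hC', le_max_right]
  have hC'0 : 0 ≤ C' := le_max_right _ _
  -- apply main
  have := Stmt11Aux.main Ω hΩb hΩm (fun x y => |ψ x y| ^ p)
    (by
      apply Continuous.rpow_const hψc.abs
      intro q
      right
      linarith)
    (C' ^ p) (Real.rpow_nonneg hC'0 p)
    (by
      intro x y
      rw [abs_of_nonneg (Real.rpow_nonneg (abs_nonneg _) p)]
      exact Real.rpow_le_rpow (abs_nonneg _) (hψbdd x y) (le_of_lt hp0))
    R
    (by
      intro x hx y
      have hxK : x ∉ K := by
        intro h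
        have := hR h
        rw [Metric.mem_closedBall, dist_zero_right] at this
        linarith
      show |ψ x y| ^ p = 0
      rw [hKs x hxK y]
      simp only [abs_zero]
      exact Real.zero_rpow (ne_of_gt hp0))
    (by
      intro x v hv y
      show |ψ x (v + y)| ^ p = |ψ x y| ^ p
      rw [hψinv x v hv y])
  exact this
end

section
/- Let Ω ⊂ ℝ³ be bounded, γ > 0, λ > 0, 3/2 < p < ∞, and ρ : Y → ℝ measurable with ρ ≥ ρ_min > 0. For w with y ↦ sup_{x∈Ω̄}|w(x,y)| in L^p(Y), define (B_{L,1} w)(x,y) = ∫_{B(x,γ) ∩ Ω} λ ((x̂−x)⊗(x̂−x)/|x̂−x|³) (∫_Y w(x̂,y') dy') dx̂. Then ρ^{-1}B_{L,1} is a bounded linear operator on this space with ‖ρ^{-1}B_{L,1} w‖ ≤ λ (∫_{B(0,γ)}|ξ|^{-1}dξ) ‖ρ^{-1}‖_{L^p(Y)} ‖w‖. -/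
open MeasureTheory Real Metric
open scoped ENNReal

local notation "E3" => EuclideanSpace ℝ (Fin 3)

lemma aux_intOn (γ : ℝ) :
    IntegrableOn (fun z : E3 => ‖z‖⁻¹) (Metric.ball 0 γ) volume := by
  constructor
  · exact (measurable_norm.inv).aestronglyMeasurable
  · rw [hasFiniteIntegral_iff_ofReal (ae_of_all _ fun z => inv_nonneg.2 (norm_nonneg z))]
    rw [lintegral_eq_lintegral_meas_le _ (ae_of_all _ fun z => inv_nonneg.2 (norm_nonneg z))
      (measurable_norm.inv).aemeasurable]
    set ν := volume.restrict (Metric.ball (0:E3) γ) with hν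
    have key : ∀ t ∈ Set.Ioi (1:ℝ), ν {a | t ≤ ‖a‖⁻¹} ≤
        ENNReal.ofReal (t ^ (-3:ℝ)) * volume (Metric.ball (0:E3) 1) := by
      intro t ht
      have ht1 : (1:ℝ) < t := ht
      have ht0 : (0:ℝ) < t := by linarith
      have hsub : {a : E3 | t ≤ ‖a‖⁻¹} ⊆ Metric.closedBall 0 t⁻¹ := by
        intro a ha
        simp only [Set.mem_setOf_eq] at ha
        have hna : 0 < ‖a‖ := by
          by_contra h
          have : ‖a‖ = 0 := le_antisymm (not_lt.1 h) (norm_nonneg a)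
          rw [this] at ha; simp at ha; linarith
        have : ‖a‖ ≤ t⁻¹ := by
          rw [← inv_inv ‖a‖]
          exact inv_anti₀ ht0 ha
        simpa [Metric.mem_closedBall, dist_zero_right] using this
      calc ν {a | t ≤ ‖a‖⁻¹} ≤ ν (Metric.closedBall 0 t⁻¹) := measure_mono hsub
        _ ≤ volume (Metric.closedBall (0:E3) t⁻¹) := Measure.restrict_le_self _
        _ = ENNReal.ofReal (t⁻¹ ^ Module.finrank ℝ E3) * volume (Metric.ball (0:E3) 1) :=
            Measure.addHaar_closedBall _ _ (inv_nonneg.2 ht0.le)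
        _ = ENNReal.ofReal (t ^ (-3:ℝ)) * volume (Metric.ball (0:E3) 1) := by
            congr 2
            rw [finrank_euclideanSpace_fin]
            rw [show (-3:ℝ) = -(3:ℕ) by norm_num, Real.rpow_neg ht0.le, Real.rpow_natCast,
              inv_pow]
    calc ∫⁻ t in Set.Ioi 0, ν {a | t ≤ ‖a‖⁻¹}
        ≤ ∫⁻ t in Set.Ioc 0 1 ∪ Set.Ioi 1, ν {a | t ≤ ‖a‖⁻¹} :=
          lintegral_mono_set Set.Ioi_subset_Ioc_union_Ioi
      _ ≤ (∫⁻ t in Set.Ioc 0 1, ν {a | t ≤ ‖a‖⁻¹}) + ∫⁻ t in Set.Ioi 1, ν {a | t ≤ ‖a‖⁻¹} :=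
          lintegral_union_le _ _ _
      _ < ⊤ := by
          refine ENNReal.add_lt_top.2 ⟨?_, ?_⟩
          · calc (∫⁻ t in Set.Ioc 0 1, ν {a | t ≤ ‖a‖⁻¹})
                ≤ ∫⁻ _ in Set.Ioc (0:ℝ) 1, volume (Metric.ball (0:E3) γ) := by
                  refine setLIntegral_mono' measurableSet_Ioc fun t _ => ?_
                  exact (measure_mono (Set.subset_univ _)).trans
                    (by rw [hν, Measure.restrict_apply_univ])
              _ < ⊤ := by
                  rw [setLIntegral_const]
                  exact ENNReal.mul_lt_top measure_ball_lt_top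
                    (by simp [Real.volume_Ioc])
          · calc (∫⁻ t in Set.Ioi 1, ν {a | t ≤ ‖a‖⁻¹})
                ≤ ∫⁻ t in Set.Ioi 1, ENNReal.ofReal (t ^ (-3:ℝ)) * volume (Metric.ball (0:E3) 1) :=
                  setLIntegral_mono' measurableSet_Ioi key
              _ = (∫⁻ t in Set.Ioi 1, ENNReal.ofReal (t ^ (-3:ℝ))) * volume (Metric.ball (0:E3) 1) :=
                  lintegral_mul_const' _ _ measure_ball_lt_top.ne
              _ < ⊤ := ENNReal.mul_lt_top
                  ((integrableOn_Ioi_rpow_of_lt (by norm_num) one_pos).setLIntegral_lt_top)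
                  measure_ball_lt_top

set_option maxHeartbeats 1000000 in
lemma aux_trans (γ : ℝ) (x : E3) :
    IntegrableOn (fun z : E3 => ‖z - x‖⁻¹) (Metric.ball x γ) volume ∧
    ∫ z in Metric.ball x γ, ‖z - x‖⁻¹ = ∫ ξ in Metric.ball (0:E3) γ, ‖ξ‖⁻¹ := by
  have hpres : MeasurePreserving (fun z : E3 => z - x) volume volume :=
    measurePreserving_sub_right volume x
  have hemb : MeasurableEmbedding (fun z : E3 => z - x) :=
    (MeasurableEquiv.subRight x).measurableEmbedding
  have hpre : (fun z : E3 => z - x) ⁻¹' Metric.ball 0 γ = Metric.ball x γ := by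
    ext z
    simp [Metric.mem_ball, dist_eq_norm]
  constructor
  · rw [← hpre]
    exact (hpres.integrableOn_comp_preimage hemb).2 (aux_intOn γ)
  · rw [← hpre]
    exact hpres.setIntegral_preimage_emb hemb (fun ξ => ‖ξ‖⁻¹) (Metric.ball 0 γ)

lemma aux_cube : MeasurableSet {y : E3 | ∀ i, y i ∈ Set.Ico (0:ℝ) 1} ∧
    volume {y : E3 | ∀ i, y i ∈ Set.Ico (0:ℝ) 1} = 1 := by
  have he : {y : E3 | ∀ i, y i ∈ Set.Ico (0:ℝ) 1} =
      (MeasurableEquiv.toLp 2 (Fin 3 → ℝ)).symm ⁻¹' (Set.univ.pi fun _ => Set.Ico (0:ℝ) 1) := by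
    ext y
    simp [Set.mem_pi]
  have hpi : MeasurableSet (Set.univ.pi fun _ : Fin 3 => Set.Ico (0:ℝ) 1) :=
    MeasurableSet.univ_pi fun _ => measurableSet_Ico
  constructor
  · rw [he]
    exact (MeasurableEquiv.toLp 2 (Fin 3 → ℝ)).symm.measurable hpi
  · rw [he, (EuclideanSpace.volume_preserving_symm_measurableEquiv_toLp (Fin 3)).measure_preimage
      hpi.nullMeasurableSet]
    rw [volume_pi_pi]
    simp [Real.volume_Ico]


/-- Boundedness estimate (3.40) for the long-range component of the two-scale
peridynamic operator (Lemma 3.8(a)): with `‖w‖ = (∫_Y sup_{x∈Ω̄}|w(x,y)|^p dy)^{1/p}`,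
`‖ρ⁻¹B_{L,1} w‖ ≤ λ (∫_{B(0,γ)}|ξ|⁻¹dξ) ‖ρ⁻¹‖_{L^p(Y)} ‖w‖`. -/
theorem stmt16 (Ω : Set (EuclideanSpace ℝ (Fin 3))) (hΩb : Bornology.IsBounded Ω)
    (lam γ ρmin : ℝ) (hlam : 0 < lam) (hγ : 0 < γ) (hρmin : 0 < ρmin)
    (ρ : EuclideanSpace ℝ (Fin 3) → ℝ) (hρ : ∀ y, ρmin ≤ ρ y)
    (p : ℝ) (hp : 3 / 2 < p)
    (w : EuclideanSpace ℝ (Fin 3) → EuclideanSpace ℝ (Fin 3) → EuclideanSpace ℝ (Fin 3))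
    (hbdd : ∀ y, BddAbove ((fun x => ‖w x y‖) '' Ω))
    (hsup : MemLp (fun y => ⨆ x ∈ Ω, ‖w x y‖) (ENNReal.ofReal p)
      (volume.restrict {y : EuclideanSpace ℝ (Fin 3) | ∀ i, y i ∈ Set.Ico (0:ℝ) 1})) :
    eLpNorm (fun y => ⨆ x ∈ Ω,
        ‖(ρ y)⁻¹ • ∫ z in Metric.ball x γ ∩ Ω,
          lam • ((‖z - x‖ ^ 3)⁻¹ •
            ((inner ℝ (z - x)
              (∫ y' in {y' : EuclideanSpace ℝ (Fin 3) | ∀ i, y' i ∈ Set.Ico (0:ℝ) 1},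
                w z y') : ℝ) • (z - x)))‖)
      (ENNReal.ofReal p)
      (volume.restrict {y : EuclideanSpace ℝ (Fin 3) | ∀ i, y i ∈ Set.Ico (0:ℝ) 1})
      ≤ ENNReal.ofReal
          (lam * ∫ ξ in Metric.ball (0 : EuclideanSpace ℝ (Fin 3)) γ, ‖ξ‖⁻¹) *
        eLpNorm (fun y => (ρ y)⁻¹) (ENNReal.ofReal p)
          (volume.restrict {y : EuclideanSpace ℝ (Fin 3) | ∀ i, y i ∈ Set.Ico (0:ℝ) 1}) *
        eLpNorm (fun y => ⨆ x ∈ Ω, ‖w x y‖) (ENNReal.ofReal p)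
          (volume.restrict {y : EuclideanSpace ℝ (Fin 3) | ∀ i, y i ∈ Set.Ico (0:ℝ) 1}) := by
  obtain ⟨hYm, hY1⟩ := aux_cube
  set Y : Set E3 := {y : E3 | ∀ i, y i ∈ Set.Ico (0:ℝ) 1} with hYdef
  haveI hprob : IsProbabilityMeasure (volume.restrict Y) :=
    ⟨by rw [Measure.restrict_apply_univ]; exact hY1⟩
  set g : E3 → ℝ := fun y => ⨆ x ∈ Ω, ‖w x y‖ with hgdef
  have hg0 : ∀ y, 0 ≤ g y := fun y =>
    Real.iSup_nonneg fun x => Real.iSup_nonneg fun _ => norm_nonneg _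
  have hp1 : (1:ℝ≥0∞) ≤ ENNReal.ofReal p := by
    rw [← ENNReal.ofReal_one]
    exact ENNReal.ofReal_le_ofReal (by linarith)
  have hgint : Integrable g (volume.restrict Y) :=
    memLp_one_iff_integrable.mp (hsup.mono_exponent hp1)
  set A : ℝ := ∫ y in Y, g y with hAdef
  have hA0 : 0 ≤ A := integral_nonneg hg0
  have hwg : ∀ z ∈ Ω, ∀ y, ‖w z y‖ ≤ g y := by
    intro z hz y
    obtain ⟨M, hM⟩ := hbdd y
    have hb : BddAbove (Set.range fun x => ⨆ _ : x ∈ Ω, ‖w x y‖) := by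
      refine ⟨max M 0, ?_⟩
      rintro v ⟨x, rfl⟩
      show (⨆ _ : x ∈ Ω, ‖w x y‖) ≤ max M 0
      by_cases hx : x ∈ Ω
      · rw [ciSup_pos hx]
        exact le_max_of_le_left (hM ⟨x, hx, rfl⟩)
      · haveI : IsEmpty (x ∈ Ω) := ⟨hx⟩
        rw [Real.iSup_of_isEmpty]
        exact le_max_right _ _
    calc ‖w z y‖ = ⨆ _ : z ∈ Ω, ‖w z y‖ := by rw [ciSup_pos hz]
      _ ≤ g y := le_ciSup hb z
  have hVA : ∀ z ∈ Ω, ‖∫ y' in Y, w z y'‖ ≤ A := by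
    intro z hz
    calc ‖∫ y' in Y, w z y'‖ ≤ ∫ y' in Y, ‖w z y'‖ := norm_integral_le_integral_norm _
      _ ≤ A := integral_mono_of_nonneg (ae_of_all _ fun y => norm_nonneg _) hgint
          (ae_of_all _ fun y => hwg z hz y)
  set I : ℝ := ∫ ξ in Metric.ball (0:E3) γ, ‖ξ‖⁻¹ with hIdef
  have hI0 : 0 ≤ I := integral_nonneg fun ξ => inv_nonneg.2 (norm_nonneg _)
  have hkey : ∀ x : E3, ‖∫ z in Metric.ball x γ ∩ Ω,
      lam • ((‖z - x‖ ^ 3)⁻¹ • ((inner ℝ (z - x) (∫ y' in Y, w z y') : ℝ) • (z - x)))‖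
      ≤ lam * A * I := by
    intro x
    set F : E3 → E3 := fun z =>
      lam • ((‖z - x‖ ^ 3)⁻¹ • ((inner ℝ (z - x) (∫ y' in Y, w z y') : ℝ) • (z - x))) with hFdef
    set h : E3 → ℝ := fun z => lam * A * ‖z - x‖⁻¹ with hhdef
    obtain ⟨hint, htr⟩ := aux_trans γ x
    have hh0 : ∀ z, 0 ≤ h z := fun z =>
      mul_nonneg (mul_nonneg hlam.le hA0) (inv_nonneg.2 (norm_nonneg _))
    have hhint : IntegrableOn h (Metric.ball x γ) volume := hint.const_mul (lam * A)
    have hhI : ∫ z in Metric.ball x γ, h z = lam * A * I := by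
      rw [hhdef]
      simp only []
      rw [integral_const_mul, htr, hIdef]
    have hFh : ∀ z ∈ Ω, ‖F z‖ ≤ h z := by
      intro z hz
      have hip : |(inner ℝ (z - x) (∫ y' in Y, w z y') : ℝ)| ≤ ‖z - x‖ * A := by
        calc |(inner ℝ (z - x) (∫ y' in Y, w z y') : ℝ)|
            ≤ ‖z - x‖ * ‖∫ y' in Y, w z y'‖ := abs_real_inner_le_norm _ _
          _ ≤ ‖z - x‖ * A := mul_le_mul_of_nonneg_left (hVA z hz) (norm_nonneg _)
      have hnorm : ‖F z‖ =
          lam * ((‖z - x‖ ^ 3)⁻¹ * (|(inner ℝ (z - x) (∫ y' in Y, w z y') : ℝ)| * ‖z - x‖)) := by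
        rw [hFdef]
        simp only [norm_smul, Real.norm_eq_abs, abs_of_nonneg hlam.le,
          abs_of_nonneg (inv_nonneg.2 (pow_nonneg (norm_nonneg (z - x)) 3))]
      rcases eq_or_lt_of_le (norm_nonneg (z - x)) with h0 | h0
      · have habs : |(inner ℝ (z - x) (∫ y' in Y, w z y') : ℝ)| = 0 := by
          refine le_antisymm ?_ (abs_nonneg _)
          calc _ ≤ ‖z - x‖ * A := hip
            _ = 0 := by rw [← h0]; ring
        rw [hnorm, habs, hhdef]
        simp [← h0]
      · have hkey2 : (‖z - x‖ ^ 3)⁻¹ * ((‖z - x‖ * A) * ‖z - x‖) = A * ‖z - x‖⁻¹ := by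
          field_simp
        calc ‖F z‖ ≤ lam * ((‖z - x‖ ^ 3)⁻¹ * ((‖z - x‖ * A) * ‖z - x‖)) := by
              rw [hnorm]
              gcongr
          _ = lam * (A * ‖z - x‖⁻¹) := by rw [hkey2]
          _ = h z := by rw [hhdef]; ring
    by_cases hFi : Integrable F (volume.restrict (Metric.ball x γ ∩ Ω))
    · obtain ⟨F', hF'sm, hFF'⟩ := hFi.1
      have hhmeas : Measurable h :=
        ((measurable_id.sub_const x).norm.inv).const_mul (lam * A)
      have hBmeas : MeasurableSet {z | h z < ‖F' z‖} :=
        measurableSet_lt hhmeas hF'sm.measurable.norm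
      have haeB : ∀ᵐ z ∂(volume.restrict (Metric.ball x γ ∩ Ω)), ‖F' z‖ ≤ h z := by
        rw [ae_iff]
        have hset : {z | ¬ ‖F' z‖ ≤ h z} = {z | h z < ‖F' z‖} := by
          ext z; simp [not_le]
        rw [hset, Measure.restrict_apply hBmeas]
        have hne : volume.restrict (Metric.ball x γ ∩ Ω) {z | F z ≠ F' z} = 0 :=
          ae_iff.1 hFF'
        have hsub : {z | h z < ‖F' z‖} ∩ (Metric.ball x γ ∩ Ω) ⊆
            {z | F z ≠ F' z} ∩ (Metric.ball x γ ∩ Ω) := by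
          rintro z ⟨hzB, hzb, hzΩ⟩
          refine ⟨fun hEq => ?_, hzb, hzΩ⟩
          have := hFh z hzΩ
          rw [hEq] at this
          exact absurd this (not_le.2 hzB)
        refine measure_mono_null hsub ?_
        exact nonpos_iff_eq_zero.1 ((Measure.le_restrict_apply _ _).trans hne.le)
      calc ‖∫ z in Metric.ball x γ ∩ Ω, F z‖
          = ‖∫ z in Metric.ball x γ ∩ Ω, F' z‖ := by rw [integral_congr_ae hFF']
        _ ≤ ∫ z in Metric.ball x γ ∩ Ω, h z :=
            norm_integral_le_of_norm_le (hhint.mono_set Set.inter_subset_left) haeB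
        _ ≤ ∫ z in Metric.ball x γ, h z :=
            integral_mono_measure (Measure.restrict_mono Set.inter_subset_left le_rfl)
              (ae_of_all _ hh0) hhint
        _ = lam * A * I := hhI
    · rw [integral_undef hFi]
      simp only [norm_zero]
      exact mul_nonneg (mul_nonneg hlam.le hA0) hI0
  -- pointwise bound in y
  have hρpos : ∀ y, (0:ℝ) < ρ y := fun y => lt_of_lt_of_le hρmin (hρ y)
  have hptw : ∀ y, ‖(⨆ x ∈ Ω,
      ‖(ρ y)⁻¹ • ∫ z in Metric.ball x γ ∩ Ω,
        lam • ((‖z - x‖ ^ 3)⁻¹ •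
          ((inner ℝ (z - x) (∫ y' in Y, w z y') : ℝ) • (z - x)))‖)‖
      ≤ (ρ y)⁻¹ * (lam * A * I) := by
    intro y
    have hinv0 : (0:ℝ) ≤ (ρ y)⁻¹ := inv_nonneg.2 (hρpos y).le
    have hbound : (0:ℝ) ≤ (ρ y)⁻¹ * (lam * A * I) :=
      mul_nonneg hinv0 (mul_nonneg (mul_nonneg hlam.le hA0) hI0)
    have hsupb : (⨆ x ∈ Ω,
        ‖(ρ y)⁻¹ • ∫ z in Metric.ball x γ ∩ Ω,
          lam • ((‖z - x‖ ^ 3)⁻¹ •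
            ((inner ℝ (z - x) (∫ y' in Y, w z y') : ℝ) • (z - x)))‖)
        ≤ (ρ y)⁻¹ * (lam * A * I) := by
      refine Real.iSup_le (fun x => Real.iSup_le (fun _ => ?_) hbound) hbound
      rw [norm_smul, Real.norm_eq_abs, abs_of_nonneg hinv0]
      exact mul_le_mul_of_nonneg_left (hkey x) hinv0
    have hsup0 : (0:ℝ) ≤ ⨆ x ∈ Ω,
        ‖(ρ y)⁻¹ • ∫ z in Metric.ball x γ ∩ Ω,
          lam • ((‖z - x‖ ^ 3)⁻¹ •
            ((inner ℝ (z - x) (∫ y' in Y, w z y') : ℝ) • (z - x)))‖ :=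
      Real.iSup_nonneg fun x => Real.iSup_nonneg fun _ => norm_nonneg _
    rw [Real.norm_eq_abs, abs_of_nonneg hsup0]
    exact hsupb
  have step1 : eLpNorm (fun y => ⨆ x ∈ Ω,
      ‖(ρ y)⁻¹ • ∫ z in Metric.ball x γ ∩ Ω,
        lam • ((‖z - x‖ ^ 3)⁻¹ •
          ((inner ℝ (z - x) (∫ y' in Y, w z y') : ℝ) • (z - x)))‖)
      (ENNReal.ofReal p) (volume.restrict Y)
      ≤ eLpNorm (fun y => (ρ y)⁻¹ * (lam * A * I)) (ENNReal.ofReal p) (volume.restrict Y) :=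
    eLpNorm_mono_real hptw
  have step2 : eLpNorm (fun y => (ρ y)⁻¹ * (lam * A * I)) (ENNReal.ofReal p) (volume.restrict Y)
      = ENNReal.ofReal (lam * A * I) *
        eLpNorm (fun y => (ρ y)⁻¹) (ENNReal.ofReal p) (volume.restrict Y) := by
    have hfun : (fun y => (ρ y)⁻¹ * (lam * A * I)) =
        (lam * A * I) • (fun y => (ρ y)⁻¹) := by
      funext y
      simp [smul_eq_mul, mul_comm]
    rw [hfun, eLpNorm_const_smul]
    congr 1
    exact Real.enorm_eq_ofReal (mul_nonneg (mul_nonneg hlam.le hA0) hI0)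
  have hAG : ENNReal.ofReal A ≤ eLpNorm g (ENNReal.ofReal p) (volume.restrict Y) := by
    have h1 : ENNReal.ofReal A = ∫⁻ y, ENNReal.ofReal (g y) ∂(volume.restrict Y) :=
      ofReal_integral_eq_lintegral_ofReal hgint (ae_of_all _ hg0)
    have h2 : (∫⁻ y, ENNReal.ofReal (g y) ∂(volume.restrict Y))
        = eLpNorm g 1 (volume.restrict Y) := by
      rw [eLpNorm_one_eq_lintegral_enorm]
      exact lintegral_congr fun y => (Real.enorm_eq_ofReal (hg0 y)).symm
    rw [h1, h2]
    exact eLpNorm_le_eLpNorm_of_exponent_le hp1 hsup.1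
  refine le_trans (le_trans step1 (le_of_eq step2)) ?_
  calc ENNReal.ofReal (lam * A * I) *
        eLpNorm (fun y => (ρ y)⁻¹) (ENNReal.ofReal p) (volume.restrict Y)
      = ENNReal.ofReal (lam * I) *
        eLpNorm (fun y => (ρ y)⁻¹) (ENNReal.ofReal p) (volume.restrict Y) *
        ENNReal.ofReal A := by
        rw [show lam * A * I = (lam * I) * A by ring,
          ENNReal.ofReal_mul (mul_nonneg hlam.le hI0)]
        ring
    _ ≤ ENNReal.ofReal (lam * I) *
        eLpNorm (fun y => (ρ y)⁻¹) (ENNReal.ofReal p) (volume.restrict Y) *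
        eLpNorm g (ENNReal.ofReal p) (volume.restrict Y) := mul_le_mul_right hAG _
end
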